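/- Every locally finite, connected, claw-free and net-free graph has at most two ends. -/

import Mathlib

open SimpleGraph

universe u

/-- The claw `K_{1,3}`, with centre `0`. -/
def claw : SimpleGraph (Fin 4) := SimpleGraph.fromRel (fun a _ => a = 0)

/-- The bull: triangle `0 1 2` with horns `3` (adjacent to `0`) and `4` (adjacent to `1`). -/
def bull : SimpleGraph (Fin 5) := SimpleGraph.fromRel (fun a b =>
  (a = 0 ∧ b = 1) ∨ (a = 0 ∧ b = 2) ∨ (a = 1 ∧ b = 2) ∨ (a = 3 ∧ b = 0) ∨ (a = 4 ∧ b = 1))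

/-- The net: triangle `0 1 2` with pendant vertices `3`, `4`, `5` attached to `0`, `1`, `2`. -/
def net : SimpleGraph (Fin 6) := SimpleGraph.fromRel (fun a b =>
  (a = 0 ∧ b = 1) ∨ (a = 0 ∧ b = 2) ∨ (a = 1 ∧ b = 2) ∨
  (a = 3 ∧ b = 0) ∨ (a = 4 ∧ b = 1) ∨ (a = 5 ∧ b = 2))

/-- `S` is a vertex separator of `G`: deleting `S` leaves a disconnected graph. -/
def IsSeparator {V : Type u} (G : SimpleGraph V) (S : Set V) : Prop :=
  ¬ (G.induce (Sᶜ : Set V)).Preconnected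

/-- `S` is a minimal vertex separator of `G`. -/
def IsMinSeparator {V : Type u} (G : SimpleGraph V) (S : Set V) : Prop :=
  IsSeparator G S ∧ ∀ T : Set V, T ⊂ S → ¬ IsSeparator G T

/-- A ray (one-way infinite path) in `G`. -/
def IsRay {V : Type u} (G : SimpleGraph V) (f : ℕ → V) : Prop :=
  Function.Injective f ∧ ∀ n, G.Adj (f n) (f (n + 1))

/-- A double ray (two-way infinite path) in `G`. -/
def IsDoubleRay {V : Type u} (G : SimpleGraph V) (f : ℤ → V) : Prop :=
  Function.Injective f ∧ ∀ n : ℤ, G.Adj (f n) (f (n + 1))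

/-- The vertex set of the component `c` of `G - v`, together with `v` itself. -/
def compSet {V : Type u} (G : SimpleGraph V) (v : V)
    (c : (G.induce {x | x ≠ v}).ConnectedComponent) : Set V :=
  insert v {x : V | ∃ h : x ≠ v, (G.induce {x | x ≠ v}).connectedComponentMk ⟨x, h⟩ = c}

/-- `G` is distance-2-complete centered at `v`: `G - v` has exactly two connected components,
and in each component `C` and for each `i`, the vertices at distance `i` from `v` in
`G[V(C) ∪ {v}]` induce a complete graph. -/
def DistanceTwoComplete {V : Type u} (G : SimpleGraph V) (v : V) : Prop :=
  (∃ c₁ c₂ : (G.induce {x | x ≠ v}).ConnectedComponent, c₁ ≠ c₂ ∧ ∀ c, c = c₁ ∨ c = c₂) ∧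
  ∀ c : (G.induce {x | x ≠ v}).ConnectedComponent, ∀ i : ℕ, ∀ x y : V,
    ∀ hx : x ∈ compSet G v c, ∀ hy : y ∈ compSet G v c, x ≠ y →
    (G.induce (compSet G v c)).dist ⟨v, Set.mem_insert v _⟩ ⟨x, hx⟩ = i →
    (G.induce (compSet G v c)).dist ⟨v, Set.mem_insert v _⟩ ⟨y, hy⟩ = i →
    G.Adj x y

/-- The ray `f` converges to the end `e` of `G`: for every finite vertex set `K`, a tail of the
ray lies in the component of `G - K` corresponding to `e`. -/
def RayTo {V : Type u} (G : SimpleGraph V) (f : ℕ → V) (e : G.end) : Prop :=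
  ∀ K : Finset V, ∃ N : ℕ, ∀ n, N ≤ n →
    ∃ h : f n ∉ (K : Set V), G.componentComplMk h = e.val (Opposite.op K)

/-- The distance class: vertices of `R` at distance exactly `n` from `v` in `G[R ∪ {v}]`. -/
def distClass {V : Type u} (G : SimpleGraph V) (v : V) (R : Set V) (n : ℕ) : Set V :=
  {x : V | x ∈ R ∧ ∃ h : x ∈ insert v R,
    (G.induce (insert v R)).dist ⟨v, Set.mem_insert v R⟩ ⟨x, h⟩ = n}

section AuxStmt9

set_option linter.unreachableTactic false
set_option linter.unusedTactic false

lemma claw_of {V : Type u} {G : SimpleGraph V} (hclaw : IsEmpty (claw ↪g G))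
    {v x y z : V} (hvx : G.Adj v x) (hvy : G.Adj v y) (hvz : G.Adj v z)
    (hxy : ¬ G.Adj x y) (hxz : ¬ G.Adj x z) (hyz : ¬ G.Adj y z)
    (nxy : x ≠ y) (nxz : x ≠ z) (nyz : y ≠ z) : False := by
  apply hclaw.false
  refine ⟨⟨![v,x,y,z], ?_⟩, ?_⟩
  · intro a b hab
    fin_cases a <;> fin_cases b <;>
      simp_all [hvx.ne, hvy.ne, hvz.ne, hvx.ne', hvy.ne', hvz.ne']
  · intro a b
    change G.Adj (![v,x,y,z] a) (![v,x,y,z] b) ↔ claw.Adj a b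
    fin_cases a <;> fin_cases b <;>
      simp [claw, SimpleGraph.fromRel_adj, hvx, hvy, hvz, hvx.symm, hvy.symm, hvz.symm,
        hxy, hxz, hyz, fun h => hxy (h :(G.Adj x y)), G.irrefl] <;>
      first
        | exact fun h => hxy h.symm
        | exact fun h => hxz h.symm
        | exact fun h => hyz h.symm
        | decide

lemma net_of {V : Type u} {G : SimpleGraph V} (hnet : IsEmpty (net ↪g G))
    {x₀ x₁ x₂ p₀ p₁ p₂ : V}
    (a01 : G.Adj x₀ x₁) (a02 : G.Adj x₀ x₂) (a12 : G.Adj x₁ x₂)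
    (b0 : G.Adj x₀ p₀) (b1 : G.Adj x₁ p₁) (b2 : G.Adj x₂ p₂)
    (n01 : ¬ G.Adj x₀ p₁) (n02 : ¬ G.Adj x₀ p₂)
    (n10 : ¬ G.Adj x₁ p₀) (n12 : ¬ G.Adj x₁ p₂)
    (n20 : ¬ G.Adj x₂ p₀) (n21 : ¬ G.Adj x₂ p₁)
    (m01 : ¬ G.Adj p₀ p₁) (m02 : ¬ G.Adj p₀ p₂) (m12 : ¬ G.Adj p₁ p₂)
    (d01 : x₀ ≠ p₁) (d02 : x₀ ≠ p₂) (d10 : x₁ ≠ p₀) (d12 : x₁ ≠ p₂)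
    (d20 : x₂ ≠ p₀) (d21 : x₂ ≠ p₁)
    (e01 : p₀ ≠ p₁) (e02 : p₀ ≠ p₂) (e12 : p₁ ≠ p₂) : False := by
  apply hnet.false
  refine ⟨⟨fun i => if i = 0 then x₀ else if i = 1 then x₁ else if i = 2 then x₂
      else if i = 3 then p₀ else if i = 4 then p₁ else p₂, ?_⟩, ?_⟩
  · intro a b hab
    fin_cases a <;> fin_cases b <;>
      simp_all [a01.ne, a02.ne, a12.ne, b0.ne, b1.ne, b2.ne,
        a01.ne', a02.ne', a12.ne', b0.ne', b1.ne', b2.ne']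
  · intro a b
    change G.Adj ((fun i : Fin 6 => if i = 0 then x₀ else if i = 1 then x₁ else if i = 2 then x₂
        else if i = 3 then p₀ else if i = 4 then p₁ else p₂) a)
      ((fun i : Fin 6 => if i = 0 then x₀ else if i = 1 then x₁ else if i = 2 then x₂
        else if i = 3 then p₀ else if i = 4 then p₁ else p₂) b) ↔ net.Adj a b
    fin_cases a <;> fin_cases b <;>
      simp [net, SimpleGraph.fromRel_adj, a01, a02, a12, b0, b1, b2,
        a01.symm, a02.symm, a12.symm, b0.symm, b1.symm, b2.symm,
        n01, n02, n10, n12, n20, n21, m01, m02, m12, G.irrefl] <;>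
      first
        | exact fun h => n01 h.symm
        | exact fun h => n02 h.symm
        | exact fun h => n10 h.symm
        | exact fun h => n12 h.symm
        | exact fun h => n20 h.symm
        | exact fun h => n21 h.symm
        | exact fun h => m01 h.symm
        | exact fun h => m02 h.symm
        | exact fun h => m12 h.symm
        | skip

variable {V : Type u} {G : SimpleGraph V} {K : Set V}

lemma comp_ne_of_mem {C D : G.ComponentCompl K} {x : V}
    (hx : x ∈ C) (hx' : x ∈ D) : C = D := by
  obtain ⟨h1, e1⟩ := hx
  obtain ⟨h2, e2⟩ := hx'
  rw [← e1, ← e2]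

/-- vertices in different componentCompls are distinct and non-adjacent -/
lemma cross_not_adj {C D : G.ComponentCompl K} (hCD : C ≠ D) {x y : V}
    (hx : x ∈ C) (hy : y ∈ D) : ¬ G.Adj x y ∧ x ≠ y := by
  constructor
  · intro hadj
    exact hCD (comp_ne_of_mem hx (SimpleGraph.ComponentCompl.mem_of_adj y x hy
      (SimpleGraph.ComponentCompl.notMem_of_mem hx) hadj.symm))
  · rintro rfl
    exact hCD (comp_ne_of_mem hx hy)

/-- a walk avoiding K stays in one componentCompl -/
lemma walk_avoid_comp_eq {x y : V} (p : G.Walk x y) (hp : ∀ v ∈ p.support, v ∉ K) :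
    G.componentComplMk (hp x p.start_mem_support) = G.componentComplMk (hp y p.end_mem_support) := by
  induction p with
  | nil => rfl
  | cons h q ih =>
    have h1 : ∀ v ∈ q.support, v ∉ K := fun v hv => hp v (by simp [hv])
    exact (G.componentComplMk_eq_of_adj _ (h1 _ q.start_mem_support) h).trans (ih h1)

/-- between two vertices of one componentCompl there is a walk inside it -/
lemma walk_in_comp {C : G.ComponentCompl K} {x y : V} (hx : x ∈ C) (hy : y ∈ C) :
    ∃ p : G.Walk x y, ∀ v ∈ p.support, v ∈ C := by
  classical
  obtain ⟨hx1, ex⟩ := hx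
  obtain ⟨hy1, ey⟩ := hy
  have hreach : (G.induce Kᶜ).Reachable ⟨x, hx1⟩ ⟨y, hy1⟩ := by
    have := ex.trans ey.symm
    exact SimpleGraph.ConnectedComponent.eq.mp this
  obtain ⟨q⟩ := hreach
  refine ⟨q.map (SimpleGraph.Embedding.induce (Kᶜ : Set V)).toHom, ?_⟩
  intro v hv
  erw [SimpleGraph.Walk.support_map, List.mem_map] at hv
  obtain ⟨u, hu, rfl⟩ := hv
  have : (G.induce Kᶜ).Reachable ⟨x, hx1⟩ u := ⟨q.takeUntil u hu⟩
  refine ⟨u.2, ?_⟩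
  rw [← ex]
  have : (G.induce Kᶜ).connectedComponentMk u = (G.induce Kᶜ).connectedComponentMk ⟨x, hx1⟩ :=
    SimpleGraph.ConnectedComponent.eq.mpr this.symm
  exact this

variable {V : Type u} {G : SimpleGraph V} {K : Set V}

lemma walk_near_s {s : V} (hs : s ∈ K) :
    ∀ n : ℕ, ∀ {x y : V} (p : G.Walk x y), p.length = n → ∀ hy : y ∉ K,
      (∀ v ∈ p.support, v = s ∨ v ∉ K) →
      ((∀ hx : x ∉ K, G.componentComplMk hx = G.componentComplMk hy ∨
         ∃ w, ∃ hw : w ∉ K, G.Adj s w ∧ G.componentComplMk hw = G.componentComplMk hy) ∧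
       (x = s → ∃ w, ∃ hw : w ∉ K, G.Adj s w ∧ G.componentComplMk hw = G.componentComplMk hy)) := by
  intro n
  induction n using Nat.strong_induction_on with
  | _ n ih =>
    intro x y p hlen hy hsup
    cases p with
    | nil =>
      refine ⟨fun hx => Or.inl rfl, ?_⟩
      rintro rfl
      exact absurd hs hy
    | @cons _ w _ hadj q =>
      have hq : ∀ v ∈ q.support, v = s ∨ v ∉ K := fun v hv => hsup v (by simp [hv])
      have hlq : q.length < n := by
        simp only [SimpleGraph.Walk.length_cons] at hlen; omega
      have IH := ih q.length hlq q rfl hy hq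
      constructor
      · intro hx
        rcases hq w q.start_mem_support with rfl | hwK
        · exact Or.inr (IH.2 rfl)
        · rcases IH.1 hwK with he | ⟨u, hu, ha, he⟩
          · exact Or.inl ((G.componentComplMk_eq_of_adj hx hwK hadj).trans he)
          · exact Or.inr ⟨u, hu, ha, he⟩
      · rintro rfl
        have hwK : w ∉ K := by
          rcases hq w q.start_mem_support with rfl | h
          · exact absurd hadj (G.irrefl)
          · exact h
        rcases IH.1 hwK with he | ⟨u, hu, ha, he⟩
        · exact ⟨w, hwK, hadj, he⟩
        · exact ⟨u, hu, ha, he⟩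

lemma sep_step {s : V} (hs : s ∈ K) {x y : V} (hx : x ∉ K) (hy : y ∉ K)
    (p : G.Walk x y) (hsup : ∀ v ∈ p.support, v = s ∨ v ∉ K) :
    G.componentComplMk hx = G.componentComplMk hy ∨
    ((∃ w, ∃ hw : w ∉ K, G.Adj s w ∧ G.componentComplMk hw = G.componentComplMk hy) ∧
     (∃ w, ∃ hw : w ∉ K, G.Adj s w ∧ G.componentComplMk hw = G.componentComplMk hx)) := by
  rcases (walk_near_s hs p.length p rfl hy hsup).1 hx with h | h
  · exact Or.inl h
  · have hsup' : ∀ v ∈ p.reverse.support, v = s ∨ v ∉ K := by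
      intro v hv; exact hsup v (by rwa [SimpleGraph.Walk.support_reverse, List.mem_reverse] at hv)
    rcases (walk_near_s hs p.reverse.length p.reverse rfl hx hsup').1 hy with h' | h'
    · exact Or.inl h'.symm
    · exact Or.inr ⟨h, h'⟩

section chains
variable {s t : V} {C : Set V}

private def ChainP (G : SimpleGraph V) (s t : V) (C : Set V) (n : ℕ) (f : ℕ → V) : Prop :=
  f 0 = s ∧ f n = t ∧ (∀ k < n, G.Adj (f k) (f (k + 1))) ∧ (∀ k, 0 < k → k < n → f k ∈ C)

lemma splice_eq {f : ℕ → V} {i d m : ℕ} (hd : 0 < d)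
    (hc : ChainP G s t C (i + d + m) f) (heq : f i = f (i + d)) :
    ∃ g : ℕ → V, ChainP G s t C (i + m) g := by
  obtain ⟨h0, h1, h2, h3⟩ := hc
  refine ⟨fun k => if k ≤ i then f k else f (k + d), ?_, ?_, ?_, ?_⟩
  · dsimp only; rw [if_pos (Nat.zero_le i)]; exact h0
  · dsimp only
    rcases Nat.eq_zero_or_pos m with hm | hm
    · subst hm
      rw [if_pos (by omega), show i + 0 = i from rfl, heq,
        show i + d = i + d + 0 from rfl]
      exact h1
    · rw [if_neg (by omega), show i + m + d = i + d + m by omega]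
      exact h1
  · intro k hk
    dsimp only
    rcases lt_trichotomy k i with h | h | h
    · rw [if_pos (by omega), if_pos (by omega)]
      exact h2 k (by omega)
    · subst h
      rw [if_pos (le_refl _), if_neg (by omega), heq, show k + 1 + d = k + d + 1 by omega]
      exact h2 (k + d) (by omega)
    · rw [if_neg (by omega), if_neg (by omega), show k + 1 + d = k + d + 1 by omega]
      exact h2 (k + d) (by omega)
  · intro k hk0 hk
    dsimp only
    by_cases h : k ≤ i
    · rw [if_pos h]; exact h3 k hk0 (by omega)
    · rw [if_neg h]; exact h3 (k + d) (by omega) (by omega)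

lemma splice_adj {f : ℕ → V} {i e m : ℕ} (he : 0 < e)
    (hc : ChainP G s t C (i + e + 1 + m) f) (hadj : G.Adj (f i) (f (i + e + 1))) :
    ∃ g : ℕ → V, ChainP G s t C (i + 1 + m) g := by
  obtain ⟨h0, h1, h2, h3⟩ := hc
  refine ⟨fun k => if k ≤ i then f k else f (k + e), ?_, ?_, ?_, ?_⟩
  · dsimp only; rw [if_pos (Nat.zero_le i)]; exact h0
  · dsimp only
    rw [if_neg (by omega), show i + 1 + m + e = i + e + 1 + m by omega]
    exact h1
  · intro k hk
    dsimp only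
    rcases lt_trichotomy k i with h | h | h
    · rw [if_pos (by omega), if_pos (by omega)]
      exact h2 k (by omega)
    · subst h
      rw [if_pos (le_refl _), if_neg (by omega), show k + 1 + e = k + e + 1 by omega]
      exact hadj
    · rw [if_neg (by omega), if_neg (by omega), show k + 1 + e = k + e + 1 by omega]
      exact h2 (k + e) (by omega)
  · intro k hk0 hk
    dsimp only
    by_cases h : k ≤ i
    · rw [if_pos h]; exact h3 k hk0 (by omega)
    · rw [if_neg h]; exact h3 (k + e) (by omega) (by omega)

lemma exists_min_chain (hex : ∃ n, ∃ f : ℕ → V, ChainP G s t C n f) :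
    ∃ n, ∃ f : ℕ → V, ChainP G s t C n f ∧
      (∀ i j, i < j → j ≤ n → f i ≠ f j) ∧
      (∀ i j, i + 2 ≤ j → j ≤ n → ¬ G.Adj (f i) (f j)) := by
  classical
  obtain ⟨f, hf⟩ := Nat.find_spec hex
  refine ⟨Nat.find hex, f, hf, ?_, ?_⟩
  · intro i j hij hjn heq
    set N := Nat.find hex with hN
    have h1 : N = i + (j - i) + (N - j) := by omega
    rw [h1] at hf
    obtain ⟨g, hg⟩ := splice_eq (G := G) (by omega : 0 < j - i) hf
      (by rw [show i + (j - i) = j by omega]; exact heq)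
    have : i + (N - j) < N := by omega
    exact Nat.find_min hex this ⟨g, hg⟩
  · intro i j hij hjn hadj
    set N := Nat.find hex with hN
    have h1 : N = i + (j - i - 1) + 1 + (N - j) := by omega
    rw [h1] at hf
    obtain ⟨g, hg⟩ := splice_adj (G := G) (by omega : 0 < j - i - 1) hf
      (by rw [show i + (j - i - 1) + 1 = j by omega]; exact hadj)
    have : i + 1 + (N - j) < N := by omega
    exact Nat.find_min hex this ⟨g, hg⟩

end chains

lemma main_net {V : Type u} {G : SimpleGraph V}
    (hlf : ∀ v : V, (G.neighborSet v).Finite)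
    (hclaw : IsEmpty (claw ↪g G)) (hnet : IsEmpty (net ↪g G))
    {K : Set V} {Cα Cβ Cγ : G.ComponentCompl K}
    (hαβ : Cα ≠ Cβ) (hαγ : Cα ≠ Cγ) (hβγ : Cβ ≠ Cγ)
    (hβinf : (Cβ : Set V).Infinite)
    {s t a₁ b b' c₁ : V} (hsK : s ∈ K) (htK : t ∈ K) (hst : s ≠ t)
    (ha : a₁ ∈ Cα) (hsa : G.Adj s a₁)
    (hb : b ∈ Cβ) (hsb : G.Adj s b)
    (hb' : b' ∈ Cβ) (htb' : G.Adj t b')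
    (hc : c₁ ∈ Cγ) (htc : G.Adj t c₁)
    (hsγ : ∀ x, x ∈ Cγ → ¬ G.Adj s x) (htα : ∀ x, x ∈ Cα → ¬ G.Adj t x) : False := by
  classical
  -- a first chain from s to t through Cβ
  obtain ⟨p, hp⟩ := walk_in_comp hb hb'
  have hex : ∃ n, ∃ f : ℕ → V, ChainP G s t (Cβ : Set V) n f := by
    refine ⟨p.length + 2,
      fun k => if k = 0 then s else if k ≤ p.length + 1 then p.getVert (k-1) else t,
      by simp, by simp, ?_, ?_⟩
    · intro k hk
      dsimp only
      rcases Nat.eq_zero_or_pos k with rfl | hk0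
      · rw [if_pos rfl, if_neg (show ¬(0 + 1 = 0) by omega),
          if_pos (show 0 + 1 ≤ p.length + 1 by omega)]
        simpa using hsb
      rcases Nat.lt_or_ge k (p.length + 1) with hkl | hkl
      · rw [if_neg (by omega), if_pos (by omega), if_neg (by omega), if_pos (by omega)]
        have := p.adj_getVert_succ (i := k - 1) (by omega)
        rwa [show k - 1 + 1 = k + 1 - 1 by omega] at this
      · have hk1 : k = p.length + 1 := by omega
        subst hk1
        rw [if_neg (by omega), if_pos (le_refl _), if_neg (by omega), if_neg (by omega)]
        simpa using htb'.symm
    · intro k hk0 hkn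
      dsimp only
      rw [if_neg (by omega), if_pos (by omega)]
      exact hp _ (SimpleGraph.Walk.mem_support_iff_exists_getVert.mpr ⟨k - 1, rfl, by omega⟩)
  obtain ⟨n, f, ⟨hf0, hfn, hfadj, hfmem⟩, hinj, hnc⟩ := exists_min_chain hex
  have hn1 : 1 ≤ n := by
    rcases Nat.eq_zero_or_pos n with rfl | h
    · exact absurd (hf0.symm.trans hfn) hst
    · exact h
  -- the extended induced path F : a₁, s, f₁, ..., f_{n-1}, t, c₁
  set N := n + 2 with hN
  set F : ℕ → V := fun k => if k = 0 then a₁ else if k ≤ n + 1 then f (k - 1) else c₁ with hF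
  have hF0 : F 0 = a₁ := by simp [hF]
  have hF1 : F 1 = s := by simp [hF, hf0]
  have hFmid : ∀ k, 1 ≤ k → k ≤ n + 1 → F k = f (k - 1) := by
    intro k h1 h2; simp only [hF]; rw [if_neg (by omega), if_pos (by omega)]
  have hFn1 : F (n + 1) = t := by rw [hFmid _ (by omega) (le_refl _)]; simpa using hfn
  have hFN : F N = c₁ := by simp only [hF, hN]; rw [if_neg (by omega), if_neg (by omega)]
  have hFβ : ∀ k, 2 ≤ k → k ≤ n → F k ∈ Cβ := by
    intro k h2 hkn
    rw [hFmid _ (by omega) (by omega)]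
    exact hfmem (k - 1) (by omega) (by omega)
  have hsnK : ∀ {x : V} {C : G.ComponentCompl K}, x ∈ C → x ∉ K := by
    intro x C hx; exact SimpleGraph.ComponentCompl.notMem_of_mem hx
  have hFA : ∀ k, k < N → G.Adj (F k) (F (k + 1)) := by
    intro k hk
    rcases Nat.eq_zero_or_pos k with rfl | hk0
    · rw [hF0, hF1]; exact hsa.symm
    rcases Nat.lt_or_ge k (n + 1) with hkl | hkl
    · rw [hFmid _ (by omega) (by omega), hFmid _ (by omega) (by omega),
        show k + 1 - 1 = (k - 1) + 1 by omega]
      exact hfadj (k - 1) (by omega)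
    · have : k = n + 1 := by omega
      subst this
      rw [hFn1, show n + 1 + 1 = N from rfl, hFN]
      exact htc
  have hFNA : ∀ i j, i + 2 ≤ j → j ≤ N → ¬ G.Adj (F i) (F j) := by
    intro i j hij hjN
    rcases Nat.eq_zero_or_pos i with rfl | hi0
    · rw [hF0]
      rcases Nat.lt_or_ge j (n + 1) with hjl | hjl
      · exact fun h => (cross_not_adj hαβ ha (hFβ j (by omega) (by omega))).1 h
      · rcases Nat.eq_or_lt_of_le hjl with hj1 | hj2
        · rw [← hj1, hFn1]; exact fun h => htα a₁ ha h.symm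
        · rw [show j = N by omega, hFN]
          exact (cross_not_adj hαγ ha hc).1
    rcases Nat.lt_or_ge j (N) with hjl | hjl
    · rw [hFmid _ (by omega) (by omega), hFmid _ (by omega) (by omega)]
      exact hnc (i - 1) (j - 1) (by omega) (by omega)
    · have hjN' : j = N := by omega
      subst hjN'
      rw [hFN]
      rcases Nat.eq_or_lt_of_le hi0 with hi1 | hi2
      · rw [← hi1, hF1]; exact hsγ c₁ hc
      · rw [hFmid _ (by omega) (by omega)]
        intro h
        exact (cross_not_adj hβγ (hfmem (i-1) (by omega) (by omega)) hc).1 h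
  have hFinj : ∀ i j, i < j → j ≤ N → F i ≠ F j := by
    intro i j hij hjN
    rcases Nat.eq_zero_or_pos i with rfl | hi0
    · rw [hF0]
      rcases Nat.lt_or_ge j (n + 1) with hjl | hjl
      · rcases Nat.eq_or_lt_of_le hij with hj1 | hj2
        · rw [← hj1, hF1]; exact fun h => (hsnK ha) (by rw [h]; exact hsK)
        · exact (cross_not_adj hαβ ha (hFβ j (by omega) (by omega))).2
      · rcases Nat.eq_or_lt_of_le hjl with hj1 | hj2
        · rw [← hj1, hFn1]; exact fun h => (hsnK ha) (by rw [h]; exact htK)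
        · rw [show j = N by omega, hFN]
          exact (cross_not_adj hαγ ha hc).2
    rcases Nat.lt_or_ge j (N) with hjl | hjl
    · rw [hFmid _ (by omega) (by omega), hFmid _ (by omega) (by omega)]
      exact hinj (i - 1) (j - 1) (by omega) (by omega)
    · have hjN' : j = N := by omega
      subst hjN'
      rw [hFN]
      rcases Nat.eq_or_lt_of_le hi0 with hi1 | hi2
      · rw [← hi1, hF1]; exact fun h => (hsnK hc) (by rw [← h]; exact hsK)
      · rcases Nat.lt_or_ge i (n + 1) with hil | hil
        · exact (cross_not_adj hβγ (hFβ i (by omega) (by omega)) hc).2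
        · have : i = n + 1 := by omega
          subst this
          rw [hFn1]; exact fun h => (hsnK hc) (by rw [← h]; exact htK)
  -- the finite forbidden zone
  set Xs : Set V := F '' (Set.Iic N) with hXs
  have hXfin : Xs.Finite := (Set.finite_Iic N).image F
  set Ws : Set V := Xs ∪ ⋃ x ∈ Xs, G.neighborSet x with hWs
  have hWfin : Ws.Finite := hXfin.union (hXfin.biUnion fun x _ => hlf x)
  have hsX : s ∈ Xs := ⟨1, by simp [hN], hF1⟩
  have hbW : b ∈ Ws := Or.inr (Set.mem_biUnion hsX hsb)
  obtain ⟨v₀, hv₀β, hv₀W⟩ := (hβinf.diff hWfin).nonempty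
  obtain ⟨p2, hp2⟩ := walk_in_comp (hv₀β : v₀ ∈ Cβ) hb
  have hexW : ∃ k, p2.getVert k ∈ Ws := ⟨p2.length, by rw [p2.getVert_length]; exact hbW⟩
  set i₀ := Nat.find hexW with hi₀
  have hi₀W : p2.getVert i₀ ∈ Ws := Nat.find_spec hexW
  have hi₀pos : 0 < i₀ := by
    rcases Nat.eq_zero_or_pos i₀ with h | h
    · exfalso; apply hv₀W; rw [← p2.getVert_zero, ← h]; exact hi₀W
    · exact h
  have hi₀le : i₀ ≤ p2.length := Nat.find_min' hexW (by rw [p2.getVert_length]; exact hbW)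
  set z₁ := p2.getVert i₀ with hz₁
  set z₂ := p2.getVert (i₀ - 1) with hz₂
  have hz₂z₁ : G.Adj z₂ z₁ := by
    have := p2.adj_getVert_succ (i := i₀ - 1) (by omega)
    rwa [show i₀ - 1 + 1 = i₀ by omega] at this
  have hz₁β : z₁ ∈ Cβ := hp2 _ (SimpleGraph.Walk.mem_support_iff_exists_getVert.mpr ⟨i₀, rfl, by omega⟩)
  have hz₂β : z₂ ∈ Cβ := hp2 _ (SimpleGraph.Walk.mem_support_iff_exists_getVert.mpr ⟨i₀ - 1, rfl, by omega⟩)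
  have hz₂W : z₂ ∉ Ws := Nat.find_min hexW (by omega)
  have hz₂X : z₂ ∉ Xs := fun h => hz₂W (Or.inl h)
  have hz₂nadj : ∀ x, x ∈ Xs → ¬ G.Adj x z₂ :=
    fun x hx hadj => hz₂W (Or.inr (Set.mem_biUnion hx hadj))
  have hz₁X : z₁ ∉ Xs := fun h => hz₂W (Or.inr (Set.mem_biUnion h hz₂z₁.symm))
  have hz₂F : ∀ j, j ≤ N → ¬ G.Adj (F j) z₂ := fun j hj => hz₂nadj _ ⟨j, hj, rfl⟩
  have hz₂Fne : ∀ j, j ≤ N → F j ≠ z₂ := fun j hj h => hz₂X (h ▸ ⟨j, hj, rfl⟩)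
  have hz₁Fne : ∀ j, j ≤ N → F j ≠ z₁ := fun j hj h => hz₁X (h ▸ ⟨j, hj, rfl⟩)
  -- the attachment interval
  have hexJ : ∃ j, G.Adj z₁ (F j) := by
    rcases hi₀W with hX | hnb
    · exact absurd hX hz₁X
    · obtain ⟨x, hxX, hxz⟩ := Set.mem_iUnion₂.mp hnb
      obtain ⟨j, hjN, rfl⟩ := hxX
      exact ⟨j, hxz.symm⟩
  set j₀ := Nat.find hexJ with hj₀def
  have hj₀ : G.Adj z₁ (F j₀) := Nat.find_spec hexJ
  have hFhigh : ∀ j, N ≤ j → F j = c₁ := by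
    intro j hj; simp only [hF]; rw [if_neg (by omega), if_neg (by omega)]
  have hnotc : ¬ G.Adj z₁ c₁ := fun h => (cross_not_adj hβγ hz₁β hc).1 h
  have hnota : ¬ G.Adj z₁ a₁ := fun h => (cross_not_adj hαβ ha hz₁β).1 h.symm
  have hj₀pos : 0 < j₀ := by
    rcases Nat.eq_zero_or_pos j₀ with h | h
    · exfalso; apply hnota; have := hj₀; rwa [h, hF0] at this
    · exact h
  have hj₀le : j₀ ≤ n + 1 := by
    by_contra hcon
    exact hnotc (by rwa [hFhigh j₀ (by omega)] at hj₀)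
  set j₁ := Nat.findGreatest (fun j => G.Adj z₁ (F j)) N with hj₁def
  have hj₁ : G.Adj z₁ (F j₁) := Nat.findGreatest_spec (P := fun j => G.Adj z₁ (F j)) (n := N) (m := j₀) (by omega) hj₀
  have hj₁N : j₁ ≤ N := Nat.findGreatest_le N
  have hj₁le : j₁ ≤ n + 1 := by
    rcases Nat.lt_or_ge j₁ (n + 2) with h | h
    · omega
    · exact absurd (by rwa [hFhigh j₁ (by omega)] at hj₁) hnotc
  have hj₀j₁ : j₀ ≤ j₁ := Nat.le_findGreatest (P := fun j => G.Adj z₁ (F j)) (by omega) hj₀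
  have hminP : ∀ j, j < j₀ → ¬ G.Adj z₁ (F j) := fun j hj => Nat.find_min hexJ hj
  have hmaxP : ∀ j, j₁ < j → j ≤ N → ¬ G.Adj z₁ (F j) := by
    intro j h1 h2 hadj
    exact absurd (Nat.le_findGreatest (P := fun j => G.Adj z₁ (F j)) h2 hadj) (by omega)
  -- case analysis
  rcases lt_trichotomy j₁ (j₀ + 1) with hcase | hcase | hcase
  · -- j₁ = j₀ : claw centered at F j₀
    have hj₁j₀ : j₁ = j₀ := by omega
    have e1 : G.Adj (F j₀) (F (j₀ - 1)) := by
      have := hFA (j₀ - 1) (by omega)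
      rw [show j₀ - 1 + 1 = j₀ by omega] at this
      exact this.symm
    exact claw_of hclaw e1 (hFA j₀ (by omega)) hj₀.symm
      (hFNA (j₀ - 1) (j₀ + 1) (by omega) (by omega))
      (fun h => hminP (j₀ - 1) (by omega) h.symm)
      (fun h => hmaxP (j₀ + 1) (by omega) (by omega) h.symm)
      (fun h => (hFinj (j₀ - 1) (j₀ + 1) (by omega) (by omega)) h)
      (hz₁Fne (j₀ - 1) (by omega))
      (hz₁Fne (j₀ + 1) (by omega))
  · -- j₁ = j₀ + 1 : net
    have hj₁e : j₁ = j₀ + 1 := by omega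
    refine net_of hnet (x₀ := F j₀) (x₁ := F (j₀ + 1)) (x₂ := z₁)
      (p₀ := F (j₀ - 1)) (p₁ := F (j₀ + 2)) (p₂ := z₂)
      (hFA j₀ (by omega)) hj₀.symm (by rw [← hj₁e]; exact hj₁.symm)
      ?_ (hFA (j₀ + 1) (by omega)) hz₂z₁.symm
      (hFNA j₀ (j₀ + 2) (by omega) (by omega))
      (hz₂F j₀ (by omega))
      (by have := hFNA (j₀ - 1) (j₀ + 1) (by omega) (by omega)
          exact fun h => this h.symm)
      (hz₂F (j₀ + 1) (by omega))
      (fun h => hminP (j₀ - 1) (by omega) h)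
      (fun h => hmaxP (j₀ + 2) (by omega) (by omega) h)
      (by have := hFNA (j₀ - 1) (j₀ + 2) (by omega) (by omega); exact this)
      (fun h => hz₂F (j₀ - 1) (by omega) h)
      (fun h => hz₂F (j₀ + 2) (by omega) h)
      (hFinj j₀ (j₀ + 2) (by omega) (by omega))
      (hz₂Fne j₀ (by omega))
      (fun h => (hFinj (j₀ - 1) (j₀ + 1) (by omega) (by omega)) h.symm)
      (hz₂Fne (j₀ + 1) (by omega))
      (fun h => (hz₁Fne (j₀ - 1) (by omega)) h.symm)
      (fun h => (hz₁Fne (j₀ + 2) (by omega)) h.symm)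
      (hFinj (j₀ - 1) (j₀ + 2) (by omega) (by omega))
      (hz₂Fne (j₀ - 1) (by omega))
      (hz₂Fne (j₀ + 2) (by omega))
    · have := hFA (j₀ - 1) (by omega)
      rw [show j₀ - 1 + 1 = j₀ by omega] at this
      exact this.symm
  · -- j₁ ≥ j₀ + 2 : claw centered at z₁
    exact claw_of hclaw hj₀ hj₁ hz₂z₁.symm
      (hFNA j₀ j₁ (by omega) (by omega))
      (hz₂F j₀ (by omega))
      (hz₂F j₁ (by omega))
      (hFinj j₀ j₁ (by omega) (by omega))
      (hz₂Fne j₀ (by omega))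
      (hz₂Fne j₁ (by omega))

end AuxStmt9

theorem stmt9 {V : Type u} (G : SimpleGraph V)
    (hlf : ∀ v : V, (G.neighborSet v).Finite) (hconn : G.Connected)
    (hclaw : IsEmpty (claw ↪g G)) (hnet : IsEmpty (net ↪g G)) :
    ∀ e₁ e₂ e₃ : G.end, e₁ = e₂ ∨ e₁ = e₃ ∨ e₂ = e₃ := by
  
  classical
  intro e₁ e₂ e₃
  by_contra hcon
  push_neg at hcon
  obtain ⟨h12, h13, h23⟩ := hcon
  -- distinct ends differ at some finite set
  have exdiff : ∀ e f : G.end, e ≠ f →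
      ∃ K : Finset V, e.val (Opposite.op K) ≠ f.val (Opposite.op K) := by
    intro e f hef
    by_contra hK
    push_neg at hK
    apply hef
    apply Subtype.ext
    funext Kop
    have := hK Kop.unop
    simpa using this
  have hmono : ∀ (e f : G.end) (K L : Finset V), K ⊆ L →
      e.val (Opposite.op K) ≠ f.val (Opposite.op K) →
      e.val (Opposite.op L) ≠ f.val (Opposite.op L) := by
    intro e f K L hKL hne heq
    apply hne
    have he := e.2 (CategoryTheory.opHomOfLE hKL)
    have hf := f.2 (CategoryTheory.opHomOfLE hKL)
    rw [← he, ← hf, heq]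
  obtain ⟨K12, hK12⟩ := exdiff e₁ e₂ h12
  obtain ⟨K13, hK13⟩ := exdiff e₁ e₃ h13
  obtain ⟨K23, hK23⟩ := exdiff e₂ e₃ h23
  set Pd : Finset V → Prop := fun K =>
    e₁.val (Opposite.op K) ≠ e₂.val (Opposite.op K) ∧
    e₁.val (Opposite.op K) ≠ e₃.val (Opposite.op K) ∧
    e₂.val (Opposite.op K) ≠ e₃.val (Opposite.op K) with hPdDef
  have hPd0 : Pd (K12 ∪ K13 ∪ K23) := by
    refine ⟨hmono _ _ _ _ ?_ hK12, hmono _ _ _ _ ?_ hK13, hmono _ _ _ _ ?_ hK23⟩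
    · exact Finset.subset_union_left.trans Finset.subset_union_left
    · exact Finset.subset_union_right.trans Finset.subset_union_left
    · exact Finset.subset_union_right
  have hexP : ∃ m : ℕ, ∃ K : Finset V, Pd K ∧ K.card = m := ⟨_, _, hPd0, rfl⟩
  obtain ⟨K, hPdK, hcard⟩ := Nat.find_spec hexP
  have hmin : ∀ K' : Finset V, K'.card < Nat.find hexP → ¬ Pd K' :=
    fun K' h hP => Nat.find_min hexP h ⟨K', hP, rfl⟩
  set C1 : G.ComponentCompl (↑K : Set V) := e₁.val (Opposite.op K) with hC1
  set C2 : G.ComponentCompl (↑K : Set V) := e₂.val (Opposite.op K) with hC2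
  set C3 : G.ComponentCompl (↑K : Set V) := e₃.val (Opposite.op K) with hC3
  have hd12 : C1 ≠ C2 := hPdK.1
  have hd13 : C1 ≠ C3 := hPdK.2.1
  have hd23 : C2 ≠ C3 := hPdK.2.2
  have hinfall : ∀ e : G.end,
      ((e.val (Opposite.op K) : G.ComponentCompl (↑K : Set V))).supp.Infinite := by
    intro e
    refine (e.val (Opposite.op K)).infinite_iff_in_all_ranges.mpr (fun L h => ?_)
    change Opposite.unop (Opposite.op K) ⊆ Opposite.unop (Opposite.op L) at h
    exact ⟨e.val (Opposite.op L), e.prop (CategoryTheory.opHomOfLE h)⟩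
  have hC1inf : (C1 : Set V).Infinite := by rw [hC1]; exact hinfall e₁
  have hC2inf : (C2 : Set V).Infinite := by rw [hC2]; exact hinfall e₂
  have hC3inf : (C3 : Set V).Infinite := by rw [hC3]; exact hinfall e₃
  -- K is nonempty
  have hKne : K.Nonempty := by
    rw [Finset.nonempty_iff_ne_empty]
    rintro rfl
    apply hd12
    obtain ⟨x, hx⟩ := C1.nonempty
    obtain ⟨y, hy⟩ := C2.nonempty
    obtain ⟨p⟩ := hconn.preconnected x y
    have hsup : ∀ v ∈ p.support, v ∉ (↑(∅ : Finset V) : Set V) := by simp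
    obtain ⟨hx1, ex⟩ := hx
    obtain ⟨hy1, ey⟩ := hy
    rw [← ex, ← ey]
    exact walk_avoid_comp_eq p hsup
  -- minimality: each s ∈ K has neighbours in two of the components
  have key : ∀ s ∈ K, ∀ (ea eb : G.end),
      ea.val (Opposite.op K) ≠ eb.val (Opposite.op K) →
      ea.val (Opposite.op (K.erase s)) = eb.val (Opposite.op (K.erase s)) →
      (∃ w, w ∈ (ea.val (Opposite.op K)).supp ∧ G.Adj s w) ∧
      (∃ w, w ∈ (eb.val (Opposite.op K)).supp ∧ G.Adj s w) := by
    intro s hs ea eb hne heq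
    have hsub : (↑(K.erase s) : Set V) ⊆ (↑K : Set V) :=
      Finset.coe_subset.mpr (Finset.erase_subset s K)
    obtain ⟨x, hx⟩ := (ea.val (Opposite.op K)).nonempty
    obtain ⟨y, hy⟩ := (eb.val (Opposite.op K)).nonempty
    have h1 : (ea.val (Opposite.op K)).hom hsub = ea.val (Opposite.op (K.erase s)) :=
      ea.2 (CategoryTheory.opHomOfLE (Finset.erase_subset s K))
    have h2 : (eb.val (Opposite.op K)).hom hsub = eb.val (Opposite.op (K.erase s)) :=
      eb.2 (CategoryTheory.opHomOfLE (Finset.erase_subset s K))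
    have hxD : x ∈ (ea.val (Opposite.op (K.erase s))).supp := by
      rw [← h1]
      exact SimpleGraph.ComponentCompl.subset_hom _ _ hx
    have hyD : y ∈ (ea.val (Opposite.op (K.erase s))).supp := by
      rw [heq, ← h2]
      exact SimpleGraph.ComponentCompl.subset_hom _ _ hy
    obtain ⟨p, hp⟩ := walk_in_comp hxD hyD
    have hsup : ∀ v ∈ p.support, v = s ∨ v ∉ (↑K : Set V) := by
      intro v hv
      have hnm := SimpleGraph.ComponentCompl.notMem_of_mem (hp v hv)
      by_cases hvs : v = s
      · exact Or.inl hvs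
      · refine Or.inr fun hvK => hnm ?_
        simp only [Finset.coe_erase, Set.mem_diff, Set.mem_singleton_iff]
        exact ⟨hvK, hvs⟩
    obtain ⟨hx1, ex⟩ := hx
    obtain ⟨hy1, ey⟩ := hy
    rcases sep_step (Finset.mem_coe.mpr hs) hx1 hy1 p hsup with
      hsame | ⟨⟨w, hw, haw, ew⟩, ⟨u, hu, hau, eu⟩⟩
    · exact absurd (by rw [← ex, ← ey]; exact hsame) hne
    · exact ⟨⟨u, ⟨hu, eu.trans ex⟩, hau⟩, ⟨w, ⟨hw, ew.trans ey⟩, haw⟩⟩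
  have P2 : ∀ s ∈ K,
      ((∃ w, w ∈ C1 ∧ G.Adj s w) ∧ (∃ w, w ∈ C2 ∧ G.Adj s w)) ∨
      ((∃ w, w ∈ C1 ∧ G.Adj s w) ∧ (∃ w, w ∈ C3 ∧ G.Adj s w)) ∨
      ((∃ w, w ∈ C2 ∧ G.Adj s w) ∧ (∃ w, w ∈ C3 ∧ G.Adj s w)) := by
    intro s hs
    have hclt : (K.erase s).card < Nat.find hexP := by
      rw [← hcard]
      exact Finset.card_erase_lt_of_mem hs
    have hnP := hmin (K.erase s) hclt
    rw [hPdDef] at hnP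
    simp only [not_and_or, not_not] at hnP
    rcases hnP with h | h | h
    · exact Or.inl (key s hs e₁ e₂ hd12 h)
    · exact Or.inr (Or.inl (key s hs e₁ e₃ hd13 h))
    · exact Or.inr (Or.inr (key s hs e₂ e₃ hd23 h))
  -- claw: no vertex has neighbours in three distinct components
  have P1 : ∀ s : V, ∀ {Ca Cb Cc : G.ComponentCompl (↑K : Set V)}, Ca ≠ Cb → Ca ≠ Cc → Cb ≠ Cc →
      (∃ w, w ∈ Ca ∧ G.Adj s w) → (∃ w, w ∈ Cb ∧ G.Adj s w) →
      ∀ x, x ∈ Cc → ¬ G.Adj s x := by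
    rintro s Ca Cb Cc hab hac hbc ⟨u, hu, hau⟩ ⟨w, hw, haw⟩ x hx hax
    exact claw_of hclaw hau haw hax (cross_not_adj hab hu hw).1 (cross_not_adj hac hu hx).1
      (cross_not_adj hbc hw hx).1 (cross_not_adj hab hu hw).2 (cross_not_adj hac hu hx).2
      (cross_not_adj hbc hw hx).2
  -- boundary vertices
  obtain ⟨⟨x1, s1⟩, hx1C, hs1K, hadj1⟩ :=
    C1.exists_adj_boundary_pair hconn.preconnected (Finset.coe_nonempty.mpr hKne)
  have hs1K' : s1 ∈ K := Finset.mem_coe.mp hs1K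
  have hn1 : ∃ w, w ∈ C1 ∧ G.Adj s1 w := ⟨x1, hx1C, hadj1.symm⟩
  rcases P2 s1 hs1K' with ⟨hA1, hA2⟩ | ⟨hB1, hB3⟩ | ⟨hC2', hC3'⟩
  · -- s1 has nbrs in C1 and C2, hence none in C3
    have hs1no3 : ∀ x, x ∈ C3 → ¬ G.Adj s1 x := P1 s1 hd12 hd13 hd23 hA1 hA2
    obtain ⟨⟨x3, k3⟩, hx3C, hk3K, hadj3⟩ :=
      C3.exists_adj_boundary_pair hconn.preconnected (Finset.coe_nonempty.mpr hKne)
    have hk3K' : k3 ∈ K := Finset.mem_coe.mp hk3K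
    have hn3 : ∃ w, w ∈ C3 ∧ G.Adj k3 w := ⟨x3, hx3C, hadj3.symm⟩
    have hst : s1 ≠ k3 := by
      rintro rfl
      exact hs1no3 x3 hx3C hadj3.symm
    rcases P2 k3 hk3K' with ⟨hD1, hD2⟩ | ⟨hD1, hD3⟩ | ⟨hD2, hD3⟩
    · exact P1 k3 hd12 hd13 hd23 hD1 hD2 x3 hx3C hadj3.symm
    · -- pairs {1,2} and {1,3} : common C1, α := C2, γ := C3
      obtain ⟨a₁, ha₁, hsa⟩ := hA2
      obtain ⟨b, hbb, hsb⟩ := hA1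
      have hD1c := hD1
      obtain ⟨b', hbb', htb'⟩ := hD1
      obtain ⟨c₁, hc₁, htc⟩ := hn3
      exact main_net hlf hclaw hnet (Ne.symm hd12) hd23 hd13 hC1inf hs1K hk3K hst
        ha₁ hsa hbb hsb hbb' htb' hc₁ htc hs1no3 (P1 k3 hd13 hd12 (Ne.symm hd23) hD1c hD3)
    · -- pairs {1,2} and {2,3} : common C2, α := C1, γ := C3
      obtain ⟨a₁, ha₁, hsa⟩ := hA1
      obtain ⟨b, hbb, hsb⟩ := hA2
      have hD2c := hD2
      obtain ⟨b', hbb', htb'⟩ := hD2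
      obtain ⟨c₁, hc₁, htc⟩ := hn3
      exact main_net hlf hclaw hnet hd12 hd13 hd23 hC2inf hs1K hk3K hst
        ha₁ hsa hbb hsb hbb' htb' hc₁ htc hs1no3 (P1 k3 hd23 (Ne.symm hd12) (Ne.symm hd13) hD2c hD3)
  · -- s1 has nbrs in C1 and C3, hence none in C2
    have hs1no2 : ∀ x, x ∈ C2 → ¬ G.Adj s1 x := P1 s1 hd13 hd12 (Ne.symm hd23) hB1 hB3
    obtain ⟨⟨x2, k2⟩, hx2C, hk2K, hadj2⟩ :=
      C2.exists_adj_boundary_pair hconn.preconnected (Finset.coe_nonempty.mpr hKne)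
    have hk2K' : k2 ∈ K := Finset.mem_coe.mp hk2K
    have hn2 : ∃ w, w ∈ C2 ∧ G.Adj k2 w := ⟨x2, hx2C, hadj2.symm⟩
    have hst : s1 ≠ k2 := by
      rintro rfl
      exact hs1no2 x2 hx2C hadj2.symm
    rcases P2 k2 hk2K' with ⟨hD1, hD2⟩ | ⟨hD1, hD3⟩ | ⟨hD2, hD3⟩
    · -- pairs {1,3} and {1,2} : common C1, α := C3, γ := C2
      obtain ⟨a₁, ha₁, hsa⟩ := hB3
      obtain ⟨b, hbb, hsb⟩ := hB1
      have hD1c := hD1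
      obtain ⟨b', hbb', htb'⟩ := hD1
      obtain ⟨c₁, hc₁, htc⟩ := hn2
      exact main_net hlf hclaw hnet (Ne.symm hd13) (Ne.symm hd23) hd12 hC1inf hs1K hk2K hst
        ha₁ hsa hbb hsb hbb' htb' hc₁ htc hs1no2 (P1 k2 hd12 hd13 hd23 hD1c hD2)
    · exact P1 k2 hd13 hd12 (Ne.symm hd23) hD1 hD3 x2 hx2C hadj2.symm
    · -- pairs {1,3} and {2,3} : common C3, α := C1, γ := C2
      obtain ⟨a₁, ha₁, hsa⟩ := hB1
      obtain ⟨b, hbb, hsb⟩ := hB3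
      have hD3c := hD3
      obtain ⟨b', hbb', htb'⟩ := hD3
      obtain ⟨c₁, hc₁, htc⟩ := hn2
      exact main_net hlf hclaw hnet hd13 hd12 (Ne.symm hd23) hC3inf hs1K hk2K hst
        ha₁ hsa hbb hsb hbb' htb' hc₁ htc hs1no2
        (P1 k2 (Ne.symm hd23) (Ne.symm hd13) (Ne.symm hd12) hD3c hD2)
  · -- s1 has nbrs in C2 and C3 plus C1 : claw
    exact P1 s1 hd23 (Ne.symm hd12) (Ne.symm hd13) hC2' hC3' x1 hx1C hadj1.symm
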